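/- With the scheme setup below (disjoint (0,1)-matrices B g, g ∈ ZMod n, satisfying equations (1) and (2), and the 2n + 2 block matrices A₀ᵢ (i ∈ ZMod n), A₁, A₂ᵢ (i ∈ ZMod n), A₃ of order 2nv), the following hold: (i) A₀₀ is the identity matrix; (ii) Σ_{i} A₀ᵢ + A₁ + Σ_{i} A₂ᵢ + A₃ equals the all-ones matrix of order 2nv; (iii) the family is closed under transposition: (A₀ᵢ)ᵀ = A₀₋ᵢ, (A₁)ᵀ = A₁, (A₂ᵢ)ᵀ = A₂₋ᵢ, (A₃)ᵀ = A₃; (iv) any two of these 2n + 2 matrices commute; (v) the ℤ-submodule of Matrix (Fin (2nv)) (Fin (2nv)) ℤ spanned by {A₀ᵢ, A₁, A₂ᵢ, A₃ : i ∈ ZMod n} is closed under matrix multiplication. Hence these matrices form a commutative association scheme (with A₃ = 0 in case k = v). -/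

import Mathlib

open Matrix Kronecker

/-- The all-ones matrix. -/
def Jmat (m : Type*) : Matrix m m ℤ := Matrix.of fun _ _ => 1

/-- The cyclic permutation matrix `P` of order `n`, with `P a b = 1` iff `b = a + 1`. -/
def Pmat (n : ℕ) : Matrix (ZMod n) (ZMod n) ℤ := Matrix.of fun a b => if b = a + 1 then 1 else 0

/-- The power `P^i` for `i ∈ ZMod n` (well defined since `Pⁿ = I`). -/
def Ppow (n : ℕ) [NeZero n] (i : ZMod n) : Matrix (ZMod n) (ZMod n) ℤ := Pmat n ^ i.val

/-- The adjacency matrices `A₀ᵢ = blockDiagonal (Pⁱ ⊗ I_v, Pⁱ ⊗ I_v)`. -/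
def A0 (n v : ℕ) [NeZero n] (i : ZMod n) :
    Matrix ((ZMod n × Fin v) ⊕ (ZMod n × Fin v)) ((ZMod n × Fin v) ⊕ (ZMod n × Fin v)) ℤ :=
  Matrix.fromBlocks (Ppow n i ⊗ₖ 1) 0 0 (Ppow n i ⊗ₖ 1)

/-- The adjacency matrix `A₁ = blockDiagonal (J_n ⊗ (J_v - I_v), J_n ⊗ (J_v - I_v))`. -/
def A1 (n v : ℕ) :
    Matrix ((ZMod n × Fin v) ⊕ (ZMod n × Fin v)) ((ZMod n × Fin v) ⊕ (ZMod n × Fin v)) ℤ :=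
  Matrix.fromBlocks (Jmat (ZMod n) ⊗ₖ (Jmat (Fin v) - 1)) 0 0
    (Jmat (ZMod n) ⊗ₖ (Jmat (Fin v) - 1))

/-- The adjacency matrices `A₂ᵢ`, with zero diagonal blocks, upper-right block
`Σ_j Pʲ ⊗ B(i+j)` and lower-left block `Σ_j Pʲ ⊗ (B(-i-j))ᵀ`. -/
def A2 (n v : ℕ) [NeZero n] (B : ZMod n → Matrix (Fin v) (Fin v) ℤ) (i : ZMod n) :
    Matrix ((ZMod n × Fin v) ⊕ (ZMod n × Fin v)) ((ZMod n × Fin v) ⊕ (ZMod n × Fin v)) ℤ :=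
  Matrix.fromBlocks 0 (∑ j : ZMod n, Ppow n j ⊗ₖ B (i + j))
    (∑ j : ZMod n, Ppow n j ⊗ₖ (B (-i - j))ᵀ) 0

/-- The adjacency matrix `A₃`, with zero diagonal blocks, upper-right block
`J_n ⊗ (J_v - Σ_j B j)` and lower-left block `J_n ⊗ (J_v - Σ_j (B j)ᵀ)`. -/
def A3 (n v : ℕ) [NeZero n] (B : ZMod n → Matrix (Fin v) (Fin v) ℤ) :
    Matrix ((ZMod n × Fin v) ⊕ (ZMod n × Fin v)) ((ZMod n × Fin v) ⊕ (ZMod n × Fin v)) ℤ :=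
  Matrix.fromBlocks 0 (Jmat (ZMod n) ⊗ₖ (Jmat (Fin v) - ∑ j : ZMod n, B j))
    (Jmat (ZMod n) ⊗ₖ (Jmat (Fin v) - ∑ j : ZMod n, (B j)ᵀ)) 0

/-- The family of the `2n + 2` adjacency matrices `A₀ᵢ, A₁, A₂ᵢ, A₃`. -/
def Fam (n v : ℕ) [NeZero n] (B : ZMod n → Matrix (Fin v) (Fin v) ℤ) :
    Set (Matrix ((ZMod n × Fin v) ⊕ (ZMod n × Fin v)) ((ZMod n × Fin v) ⊕ (ZMod n × Fin v)) ℤ) :=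
  {A1 n v, A3 n v B} ∪ Set.range (A0 n v) ∪ Set.range (A2 n v B)

section Helpers

variable {n v : ℕ} [NeZero n]

lemma Pmat_pow_apply (m : ℕ) :
    ∀ a b : ZMod n, (Pmat n ^ m) a b = if b = a + (m : ZMod n) then 1 else 0 := by
  induction m with
  | zero => intro a b; simp [Matrix.one_apply, eq_comm]
  | succ m ih =>
    intro a b
    rw [pow_succ, Matrix.mul_apply]
    simp only [ih]
    simp only [Pmat, Matrix.of_apply, ite_mul, one_mul, zero_mul]
    rw [Finset.sum_ite_eq' Finset.univ (a + (m : ZMod n))]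
    simp [Nat.cast_succ, add_assoc]

lemma Ppow_apply (i a b : ZMod n) : Ppow n i a b = if b = a + i then 1 else 0 := by
  rw [Ppow, Pmat_pow_apply, ZMod.natCast_val, ZMod.cast_id]

/-- circulant-type block built from `Ppow`. -/
def Circ (n v : ℕ) [NeZero n] (C : ZMod n → Matrix (Fin v) (Fin v) ℤ) :
    Matrix (ZMod n × Fin v) (ZMod n × Fin v) ℤ := ∑ m : ZMod n, Ppow n m ⊗ₖ C m

lemma Circ_apply (C : ZMod n → Matrix (Fin v) (Fin v) ℤ) (p q : ZMod n × Fin v) :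
    Circ n v C p q = C (q.1 - p.1) p.2 q.2 := by
  simp only [Circ, Matrix.sum_apply, Matrix.kroneckerMap_apply, Ppow_apply]
  rw [Finset.sum_eq_single (q.1 - p.1)]
  · rw [if_pos (by ring), one_mul]
  · intro m _ hm; rw [if_neg, zero_mul]; intro h; exact hm (by rw [h]; ring)
  · simp

lemma Circ_ext {C D : ZMod n → Matrix (Fin v) (Fin v) ℤ} (h : ∀ m, C m = D m) :
    Circ n v C = Circ n v D := by
  ext p q; rw [Circ_apply, Circ_apply, h]

lemma Circ_mul (C D : ZMod n → Matrix (Fin v) (Fin v) ℤ) :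
    Circ n v C * Circ n v D = Circ n v (fun s => ∑ m : ZMod n, C m * D (s - m)) := by
  ext p q
  rw [Matrix.mul_apply, Circ_apply]
  simp only [Circ_apply, Matrix.sum_apply, Matrix.mul_apply]
  rw [Fintype.sum_prod_type]
  refine Fintype.sum_equiv (Equiv.subRight p.1) _ _ fun c1 => ?_
  have h : q.1 - p.1 - (c1 - p.1) = q.1 - c1 := by ring
  simp only [Equiv.subRight_apply, h]

lemma Circ_transpose (C : ZMod n → Matrix (Fin v) (Fin v) ℤ) :
    (Circ n v C)ᵀ = Circ n v (fun m => (C (-m))ᵀ) := by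
  ext p q
  rw [Matrix.transpose_apply, Circ_apply, Circ_apply]
  rw [neg_sub]
  rfl

lemma Circ_add (C D : ZMod n → Matrix (Fin v) (Fin v) ℤ) :
    Circ n v C + Circ n v D = Circ n v (fun m => C m + D m) := by
  ext p q; simp [Circ_apply]

lemma Circ_smul (z : ℤ) (C : ZMod n → Matrix (Fin v) (Fin v) ℤ) :
    z • Circ n v C = Circ n v (fun m => z • C m) := by
  ext p q
  rw [Matrix.smul_apply, Circ_apply, Circ_apply, Matrix.smul_apply]

lemma Circ_sum {ι : Type*} (s : Finset ι) (C : ι → ZMod n → Matrix (Fin v) (Fin v) ℤ) :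
    ∑ i ∈ s, Circ n v (C i) = Circ n v (fun m => ∑ i ∈ s, C i m) := by
  ext p q; simp [Circ_apply, Matrix.sum_apply]

lemma kroneckerJ (M : Matrix (Fin v) (Fin v) ℤ) :
    Jmat (ZMod n) ⊗ₖ M = Circ n v (fun _ => M) := by
  ext p q
  rw [Circ_apply]
  simp [Matrix.kroneckerMap_apply, Jmat]

lemma kroneckerP (i : ZMod n) :
    Ppow n i ⊗ₖ (1 : Matrix (Fin v) (Fin v) ℤ)
      = Circ n v (fun m => if m = i then 1 else 0) := by
  ext ⟨a, x⟩ ⟨b, y⟩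
  simp only [Matrix.kroneckerMap_apply, Circ_apply, Ppow_apply]
  by_cases hb : b = a + i
  · rw [if_pos hb, if_pos (by rw [hb]; ring), one_mul]
  · rw [if_neg hb, if_neg (fun h => hb (by rw [← h]; ring)), zero_mul, Matrix.zero_apply]

lemma CircJ : Circ n v (fun _ => Jmat (Fin v)) = Jmat (ZMod n × Fin v) := by
  ext p q; rw [Circ_apply]; rfl

lemma Circ_del_zero : Circ n v (fun m => if m = (0 : ZMod n) then 1 else 0) = 1 := by
  ext ⟨a, x⟩ ⟨b, y⟩
  rw [Circ_apply]
  by_cases h : b = a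
  · subst h
    rw [if_pos (by ring)]
    simp [Matrix.one_apply, Prod.ext_iff]
  · rw [if_neg (by simpa [sub_eq_zero] using h)]
    rw [Matrix.zero_apply]
    exact (Matrix.one_apply_ne (fun hh => h (congrArg Prod.fst hh).symm)).symm

lemma sum_fromBlocks {ι α m₁ m₂ : Type*} [AddCommMonoid α]
    (s : Finset ι) (A : ι → Matrix m₁ m₁ α) (B : ι → Matrix m₁ m₂ α)
    (C : ι → Matrix m₂ m₁ α) (D : ι → Matrix m₂ m₂ α) :
    ∑ i ∈ s, Matrix.fromBlocks (A i) (B i) (C i) (D i)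
      = Matrix.fromBlocks (∑ i ∈ s, A i) (∑ i ∈ s, B i) (∑ i ∈ s, C i) (∑ i ∈ s, D i) := by
  ext (p | p) (q | q) <;> simp [Matrix.sum_apply]

lemma fromBlocksJ {m₁ m₂ : Type*} :
    Matrix.fromBlocks (Jmat m₁) (Matrix.of fun (_ : m₁) (_ : m₂) => (1 : ℤ))
      (Matrix.of fun (_ : m₂) (_ : m₁) => (1 : ℤ)) (Jmat m₂) = Jmat (m₁ ⊕ m₂) := by
  ext (p | p) (q | q) <;> rfl

lemma zsum_shift {M : Type*} [AddCommMonoid M] (f : ZMod n → M) (c : ZMod n) :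
    ∑ i : ZMod n, f (c + i) = ∑ i : ZMod n, f i :=
  Fintype.sum_equiv (Equiv.addLeft c) _ _ fun _ => rfl

lemma zsum_sub {M : Type*} [AddCommMonoid M] (f : ZMod n → M) (c : ZMod n) :
    ∑ i : ZMod n, f (c - i) = ∑ i : ZMod n, f i :=
  Fintype.sum_equiv (Equiv.subLeft c) _ _ fun _ => rfl

lemma Circ_const_mul (M : Matrix (Fin v) (Fin v) ℤ) (D : ZMod n → Matrix (Fin v) (Fin v) ℤ) :
    Circ n v (fun _ => M) * Circ n v D = Circ n v (fun _ => M * ∑ g : ZMod n, D g) := by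
  rw [Circ_mul]
  refine Circ_ext fun s => ?_
  rw [← Finset.mul_sum, zsum_sub D s]

lemma Circ_mul_const (D : ZMod n → Matrix (Fin v) (Fin v) ℤ) (M : Matrix (Fin v) (Fin v) ℤ) :
    Circ n v D * Circ n v (fun _ => M) = Circ n v (fun _ => (∑ g : ZMod n, D g) * M) := by
  rw [Circ_mul]
  exact Circ_ext fun s => (Finset.sum_mul _ _ _).symm

lemma Circ_const_const (M M' : Matrix (Fin v) (Fin v) ℤ) :
    Circ n v (fun _ => M) * Circ n v (fun _ => M') = Circ n v (fun _ => (n : ℤ) • (M * M')) := by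
  rw [Circ_const_mul]
  refine Circ_ext fun s => ?_
  rw [Finset.sum_const, Finset.card_univ, ZMod.card]
  exact (mul_smul_comm _ _ _).trans (natCast_zsmul _ _).symm

lemma Circ_del_mul (i : ZMod n) (D : ZMod n → Matrix (Fin v) (Fin v) ℤ) :
    Circ n v (fun m => if m = i then 1 else 0) * Circ n v D = Circ n v (fun s => D (s - i)) := by
  rw [Circ_mul]
  refine Circ_ext fun s => ?_
  simp only [ite_mul, one_mul, zero_mul]
  rw [Finset.sum_ite_eq' Finset.univ i fun m => D (s - m)]
  simp

lemma Circ_mul_del (D : ZMod n → Matrix (Fin v) (Fin v) ℤ) (i : ZMod n) :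
    Circ n v D * Circ n v (fun m => if m = i then 1 else 0) = Circ n v (fun s => D (s - i)) := by
  rw [Circ_mul]
  refine Circ_ext fun s => ?_
  have h : ∀ m : ZMod n, (D m * if s - m = i then 1 else 0) = if m = s - i then D m else 0 := by
    intro m
    by_cases hm : m = s - i
    · rw [if_pos (by rw [hm]; ring), if_pos hm, mul_one]
    · rw [if_neg (fun hh => hm (by rw [← hh]; ring)), if_neg hm, mul_zero]
  simp only [h]
  rw [Finset.sum_ite_eq' Finset.univ (s - i) D]
  simp

lemma mulDD {m₁ m₂ : Type*} [Fintype m₁] [Fintype m₂]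
    (X : Matrix m₁ m₁ ℤ) (X' : Matrix m₂ m₂ ℤ)
    (Z : Matrix m₁ m₁ ℤ) (Z' : Matrix m₂ m₂ ℤ) :
    Matrix.fromBlocks X (0 : Matrix m₁ m₂ ℤ) (0 : Matrix m₂ m₁ ℤ) X'
      * Matrix.fromBlocks Z 0 0 Z'
      = Matrix.fromBlocks (X * Z) 0 0 (X' * Z') := by
  rw [Matrix.fromBlocks_multiply]; simp

lemma mulDO {m₁ m₂ : Type*} [Fintype m₁] [Fintype m₂]
    (X : Matrix m₁ m₁ ℤ) (X' : Matrix m₂ m₂ ℤ) (U : Matrix m₁ m₂ ℤ) (V : Matrix m₂ m₁ ℤ) :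
    Matrix.fromBlocks X 0 0 X' * Matrix.fromBlocks 0 U V 0
      = Matrix.fromBlocks 0 (X * U) (X' * V) 0 := by
  rw [Matrix.fromBlocks_multiply]; simp

lemma mulOD {m₁ m₂ : Type*} [Fintype m₁] [Fintype m₂]
    (U : Matrix m₁ m₂ ℤ) (V : Matrix m₂ m₁ ℤ) (X : Matrix m₁ m₁ ℤ) (X' : Matrix m₂ m₂ ℤ) :
    Matrix.fromBlocks 0 U V 0 * Matrix.fromBlocks X 0 0 X'
      = Matrix.fromBlocks 0 (U * X') (V * X) 0 := by
  rw [Matrix.fromBlocks_multiply]; simp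

lemma mulOO {m₁ m₂ : Type*} [Fintype m₁] [Fintype m₂]
    (U : Matrix m₁ m₂ ℤ) (V : Matrix m₂ m₁ ℤ) (U' : Matrix m₁ m₂ ℤ) (V' : Matrix m₂ m₁ ℤ) :
    Matrix.fromBlocks 0 U V 0 * Matrix.fromBlocks 0 U' V' 0
      = Matrix.fromBlocks (U * V') 0 0 (V * U') := by
  rw [Matrix.fromBlocks_multiply]; simp

end Helpers

section Hyps

variable {v k n μ : ℕ} [NeZero n] {B : ZMod n → Matrix (Fin v) (Fin v) ℤ}

lemma JJv : Jmat (Fin v) * Jmat (Fin v) = (v : ℤ) • Jmat (Fin v) := by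
  ext x y
  simp [Jmat, Matrix.mul_apply]

lemma rowsum (hB01 : ∀ g i j, B g i j = 0 ∨ B g i j = 1)
    (h1 : ∑ g : ZMod n, B g * (B g)ᵀ = (k : ℤ) • 1 + (μ : ℤ) • (Jmat (Fin v) - 1)) :
    (∑ g : ZMod n, B g) * Jmat (Fin v) = (k : ℤ) • Jmat (Fin v) := by
  ext x y
  have hd := Matrix.ext_iff.mpr h1 x x
  simp only [Matrix.sum_apply, Matrix.mul_apply, Matrix.transpose_apply] at hd
  have hsq : ∀ g c, B g x c * B g x c = B g x c := fun g c => by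
    rcases hB01 g x c with h | h <;> rw [h] <;> norm_num
  simp only [hsq, Matrix.add_apply, Matrix.smul_apply, Matrix.one_apply_eq, Matrix.sub_apply,
    Jmat, Matrix.of_apply, smul_eq_mul, mul_one, sub_self, mul_zero, add_zero] at hd
  simp only [Jmat, Matrix.mul_apply, Matrix.of_apply, mul_one, Matrix.smul_apply,
    Matrix.sum_apply, smul_eq_mul]
  rw [Finset.sum_comm, hd]

lemma colsum (hB01 : ∀ g i j, B g i j = 0 ∨ B g i j = 1)
    (h1' : ∑ g : ZMod n, (B g)ᵀ * B g = (k : ℤ) • 1 + (μ : ℤ) • (Jmat (Fin v) - 1)) :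
    Jmat (Fin v) * (∑ g : ZMod n, B g) = (k : ℤ) • Jmat (Fin v) := by
  ext x y
  have hd := Matrix.ext_iff.mpr h1' y y
  simp only [Matrix.sum_apply, Matrix.mul_apply, Matrix.transpose_apply] at hd
  have hsq : ∀ g c, B g c y * B g c y = B g c y := fun g c => by
    rcases hB01 g c y with h | h <;> rw [h] <;> norm_num
  simp only [hsq, Matrix.add_apply, Matrix.smul_apply, Matrix.one_apply_eq, Matrix.sub_apply,
    Jmat, Matrix.of_apply, smul_eq_mul, mul_one, sub_self, mul_zero, add_zero] at hd
  simp only [Jmat, Matrix.mul_apply, Matrix.of_apply, one_mul, mul_one, Matrix.smul_apply,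
    Matrix.sum_apply, smul_eq_mul]
  rw [Finset.sum_comm, hd]

lemma convB (h1 : ∑ g : ZMod n, B g * (B g)ᵀ = (k : ℤ) • 1 + (μ : ℤ) • (Jmat (Fin v) - 1))
    (h2 : ∀ h : ZMod n, h ≠ 0 →
      ∑ g : ZMod n, B g * (B (g - h))ᵀ = (μ : ℤ) • (Jmat (Fin v) - 1)) (h : ZMod n) :
    ∑ g : ZMod n, B g * (B (g - h))ᵀ
      = (μ : ℤ) • (Jmat (Fin v) - 1) + if h = 0 then (k : ℤ) • 1 else 0 := by
  by_cases h0 : h = 0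
  · subst h0
    simp only [sub_zero, if_pos rfl]
    rw [h1]; exact add_comm _ _
  · rw [if_neg h0, h2 h h0, add_zero]

lemma convB' (h1' : ∑ g : ZMod n, (B g)ᵀ * B g = (k : ℤ) • 1 + (μ : ℤ) • (Jmat (Fin v) - 1))
    (h2' : ∀ h : ZMod n, h ≠ 0 →
      ∑ g : ZMod n, (B (g - h))ᵀ * B g = (μ : ℤ) • (Jmat (Fin v) - 1)) (h : ZMod n) :
    ∑ g : ZMod n, (B (g - h))ᵀ * B g
      = (μ : ℤ) • (Jmat (Fin v) - 1) + if h = 0 then (k : ℤ) • 1 else 0 := by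
  by_cases h0 : h = 0
  · subst h0
    simp only [sub_zero, if_pos rfl]
    rw [h1']; exact add_comm _ _
  · rw [if_neg h0, h2' h h0, add_zero]

lemma BBt (h1 : ∑ g : ZMod n, B g * (B g)ᵀ = (k : ℤ) • 1 + (μ : ℤ) • (Jmat (Fin v) - 1))
    (h2 : ∀ h : ZMod n, h ≠ 0 →
      ∑ g : ZMod n, B g * (B (g - h))ᵀ = (μ : ℤ) • (Jmat (Fin v) - 1)) :
    (∑ g : ZMod n, B g) * (∑ g : ZMod n, (B g)ᵀ)
      = (k : ℤ) • 1 + (n : ℤ) • ((μ : ℤ) • (Jmat (Fin v) - 1)) := by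
  rw [Finset.sum_mul_sum]
  calc ∑ g : ZMod n, ∑ g' : ZMod n, B g * (B g')ᵀ
      = ∑ g : ZMod n, ∑ h : ZMod n, B g * (B (g - h))ᵀ :=
        Finset.sum_congr rfl fun g _ => (zsum_sub (fun x => B g * (B x)ᵀ) g).symm
    _ = ∑ h : ZMod n, ∑ g : ZMod n, B g * (B (g - h))ᵀ := Finset.sum_comm
    _ = ∑ h : ZMod n, ((μ : ℤ) • (Jmat (Fin v) - 1) + if h = 0 then (k : ℤ) • 1 else 0) :=
        Finset.sum_congr rfl fun h _ => convB h1 h2 h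
    _ = (k : ℤ) • 1 + (n : ℤ) • ((μ : ℤ) • (Jmat (Fin v) - 1)) := by
        rw [Finset.sum_add_distrib, Finset.sum_const, Finset.card_univ, ZMod.card,
          Finset.sum_ite_eq' Finset.univ (0 : ZMod n)]
        simp only [Finset.mem_univ, if_pos, natCast_zsmul]
        abel

lemma BtB (h1' : ∑ g : ZMod n, (B g)ᵀ * B g = (k : ℤ) • 1 + (μ : ℤ) • (Jmat (Fin v) - 1))
    (h2' : ∀ h : ZMod n, h ≠ 0 →
      ∑ g : ZMod n, (B (g - h))ᵀ * B g = (μ : ℤ) • (Jmat (Fin v) - 1)) :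
    (∑ g : ZMod n, (B g)ᵀ) * (∑ g : ZMod n, B g)
      = (k : ℤ) • 1 + (n : ℤ) • ((μ : ℤ) • (Jmat (Fin v) - 1)) := by
  rw [Finset.sum_mul_sum]
  calc ∑ g' : ZMod n, ∑ g : ZMod n, (B g')ᵀ * B g
      = ∑ g : ZMod n, ∑ g' : ZMod n, (B g')ᵀ * B g := Finset.sum_comm
    _ = ∑ g : ZMod n, ∑ h : ZMod n, (B (g - h))ᵀ * B g :=
        Finset.sum_congr rfl fun g _ => (zsum_sub (fun x => (B x)ᵀ * B g) g).symm
    _ = ∑ h : ZMod n, ∑ g : ZMod n, (B (g - h))ᵀ * B g := Finset.sum_comm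
    _ = ∑ h : ZMod n, ((μ : ℤ) • (Jmat (Fin v) - 1) + if h = 0 then (k : ℤ) • 1 else 0) :=
        Finset.sum_congr rfl fun h _ => convB' h1' h2' h
    _ = (k : ℤ) • 1 + (n : ℤ) • ((μ : ℤ) • (Jmat (Fin v) - 1)) := by
        rw [Finset.sum_add_distrib, Finset.sum_const, Finset.card_univ, ZMod.card,
          Finset.sum_ite_eq' Finset.univ (0 : ZMod n)]
        simp only [Finset.mem_univ, if_pos, natCast_zsmul]
        abel

end Hyps
theorem stmt_12 (v k n μ : ℕ) [NeZero n]
    (B : ZMod n → Matrix (Fin v) (Fin v) ℤ)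
    (hB01 : ∀ g i j, B g i j = 0 ∨ B g i j = 1)
    (hdisj : ∀ i j (g g' : ZMod n), B g i j = 1 → B g' i j = 1 → g = g')
    (h1 : ∑ g : ZMod n, B g * (B g)ᵀ = (k : ℤ) • 1 + (μ : ℤ) • (Jmat (Fin v) - 1))
    (h1' : ∑ g : ZMod n, (B g)ᵀ * B g = (k : ℤ) • 1 + (μ : ℤ) • (Jmat (Fin v) - 1))
    (h2 : ∀ h : ZMod n, h ≠ 0 →
      ∑ g : ZMod n, B g * (B (g - h))ᵀ = (μ : ℤ) • (Jmat (Fin v) - 1))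
    (h2' : ∀ h : ZMod n, h ≠ 0 →
      ∑ g : ZMod n, (B (g - h))ᵀ * B g = (μ : ℤ) • (Jmat (Fin v) - 1)) :
    (A0 n v 0 = 1) ∧
    ((∑ i : ZMod n, A0 n v i) + A1 n v + (∑ i : ZMod n, A2 n v B i) + A3 n v B =
      Jmat ((ZMod n × Fin v) ⊕ (ZMod n × Fin v))) ∧
    (∀ i : ZMod n, (A0 n v i)ᵀ = A0 n v (-i)) ∧
    ((A1 n v)ᵀ = A1 n v) ∧
    (∀ i : ZMod n, (A2 n v B i)ᵀ = A2 n v B (-i)) ∧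
    ((A3 n v B)ᵀ = A3 n v B) ∧
    (∀ X ∈ Fam n v B, ∀ Y ∈ Fam n v B, X * Y = Y * X) ∧
    (∀ X ∈ Submodule.span ℤ (Fam n v B), ∀ Y ∈ Submodule.span ℤ (Fam n v B),
      X * Y ∈ Submodule.span ℤ (Fam n v B)) := by
  classical
  -- block representations
  have hA0 : ∀ i : ZMod n, A0 n v i
      = Matrix.fromBlocks (Circ n v fun m => if m = i then 1 else 0) 0 0
        (Circ n v fun m => if m = i then 1 else 0) := fun i => by
    unfold A0; rw [kroneckerP]
  have hA1 : A1 n v = Matrix.fromBlocks (Circ n v fun _ => Jmat (Fin v) - 1) 0 0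
      (Circ n v fun _ => Jmat (Fin v) - 1) := by
    unfold A1; rw [kroneckerJ]
  have hA2 : ∀ i : ZMod n, A2 n v B i = Matrix.fromBlocks 0 (Circ n v fun m => B (i + m))
      (Circ n v fun m => (B (-i - m))ᵀ) 0 := fun i => rfl
  have hA3 : A3 n v B = Matrix.fromBlocks 0
      (Circ n v fun _ => Jmat (Fin v) - ∑ j : ZMod n, B j)
      (Circ n v fun _ => Jmat (Fin v) - ∑ j : ZMod n, (B j)ᵀ) 0 := by
    unfold A3; rw [kroneckerJ, kroneckerJ]
  have FB4 : ∀ C1 C2 D1 D2 : ZMod n → Matrix (Fin v) (Fin v) ℤ,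
      (∀ m, C1 m = D1 m) → (∀ m, C2 m = D2 m) →
      Matrix.fromBlocks (Circ n v C1) (0 : Matrix (ZMod n × Fin v) (ZMod n × Fin v) ℤ)
          (0 : Matrix (ZMod n × Fin v) (ZMod n × Fin v) ℤ) (Circ n v C2)
        = Matrix.fromBlocks (Circ n v D1) 0 0 (Circ n v D2) :=
    fun _ _ _ _ e1 e2 => by rw [Circ_ext e1, Circ_ext e2]
  have FBO : ∀ C1 C2 D1 D2 : ZMod n → Matrix (Fin v) (Fin v) ℤ,
      (∀ m, C1 m = D1 m) → (∀ m, C2 m = D2 m) →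
      Matrix.fromBlocks (0 : Matrix (ZMod n × Fin v) (ZMod n × Fin v) ℤ) (Circ n v C1)
          (Circ n v C2) (0 : Matrix (ZMod n × Fin v) (ZMod n × Fin v) ℤ)
        = Matrix.fromBlocks 0 (Circ n v D1) (Circ n v D2) 0 :=
    fun _ _ _ _ e1 e2 => by rw [Circ_ext e1, Circ_ext e2]
  -- sums of the families
  have hdel : ∀ m : ZMod n,
      (∑ i : ZMod n, if m = i then (1 : Matrix (Fin v) (Fin v) ℤ) else 0) = 1 := fun m => by
    rw [Finset.sum_ite_eq Finset.univ m fun _ => (1 : Matrix (Fin v) (Fin v) ℤ)]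
    simp
  have hsumA0 : ∑ i : ZMod n, A0 n v i
      = Matrix.fromBlocks (Circ n v fun _ => (1 : Matrix (Fin v) (Fin v) ℤ)) 0 0
        (Circ n v fun _ => 1) := by
    simp only [hA0]
    rw [sum_fromBlocks]
    simp only [Finset.sum_const, smul_zero, Circ_sum]
    exact FB4 _ _ _ _ hdel hdel
  have hshift1 : ∀ i : ZMod n, ∑ g : ZMod n, B (i + g) = ∑ g : ZMod n, B g :=
    fun i => zsum_shift B i
  have hshift2 : ∀ i : ZMod n, ∑ g : ZMod n, (B (-i - g))ᵀ = ∑ g : ZMod n, (B g)ᵀ :=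
    fun i => zsum_sub (fun x => (B x)ᵀ) (-i)
  have hsumA2 : ∑ i : ZMod n, A2 n v B i
      = Matrix.fromBlocks 0 (Circ n v fun _ => ∑ g : ZMod n, B g)
        (Circ n v fun _ => ∑ g : ZMod n, (B g)ᵀ) 0 := by
    simp only [hA2]
    rw [sum_fromBlocks]
    simp only [Finset.sum_const, smul_zero, Circ_sum]
    refine FBO _ _ _ _ (fun m => ?_) (fun m => ?_)
    · calc ∑ i : ZMod n, B (i + m) = ∑ i : ZMod n, B (m + i) :=
            Finset.sum_congr rfl fun i _ => by rw [add_comm]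
        _ = ∑ g : ZMod n, B g := zsum_shift B m
    · calc ∑ i : ZMod n, (B (-i - m))ᵀ = ∑ i : ZMod n, (B (-m - i))ᵀ :=
            Finset.sum_congr rfl fun i _ => by rw [show -i - m = -m - i from by ring]
        _ = ∑ g : ZMod n, (B g)ᵀ := zsum_sub (fun x => (B x)ᵀ) (-m)
  -- scalar-level facts
  have hJT : (Jmat (Fin v))ᵀ = Jmat (Fin v) := rfl
  have hrow := rowsum hB01 h1
  have hcol := colsum hB01 h1'
  have hrowT : (∑ g : ZMod n, (B g)ᵀ) * Jmat (Fin v) = (k : ℤ) • Jmat (Fin v) := by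
    have h := congrArg Matrix.transpose hcol
    rwa [Matrix.transpose_mul, Matrix.transpose_smul, Matrix.transpose_sum, hJT] at h
  have hcolT : Jmat (Fin v) * (∑ g : ZMod n, (B g)ᵀ) = (k : ℤ) • Jmat (Fin v) := by
    have h := congrArg Matrix.transpose hrow
    rwa [Matrix.transpose_mul, Matrix.transpose_smul, Matrix.transpose_sum, hJT] at h
  have hBBt' : (∑ g : ZMod n, B g) * (∑ g : ZMod n, (B g)ᵀ)
      = (k : ℤ) • 1 + (n : ℤ) • ((μ : ℤ) • (Jmat (Fin v) - 1)) := BBt h1 h2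
  have hBtB' : (∑ g : ZMod n, (B g)ᵀ) * (∑ g : ZMod n, B g)
      = (k : ℤ) • 1 + (n : ℤ) • ((μ : ℤ) • (Jmat (Fin v) - 1)) := BtB h1' h2'
  -- products with A0
  have hA0A0 : ∀ i j : ZMod n, A0 n v i * A0 n v j = A0 n v (i + j) := by
    intro i j
    rw [hA0 i, hA0 j, hA0 (i + j), mulDD, Circ_del_mul]
    refine FB4 _ _ _ _ (fun s => ?_) (fun s => ?_) <;>
    · by_cases hs : s = i + j
      · rw [if_pos (by rw [hs]; ring), if_pos hs]
      · rw [if_neg (fun hh => hs (by rw [← hh]; ring)), if_neg hs]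
  have hA0A1 : ∀ i : ZMod n, A0 n v i * A1 n v = A1 n v := by
    intro i
    rw [hA1, hA0 i, mulDD, Circ_del_mul]
  have hA1A0 : ∀ i : ZMod n, A1 n v * A0 n v i = A1 n v := by
    intro i
    rw [hA1, hA0 i, mulDD, Circ_mul_del]
  have hA0A2 : ∀ i j : ZMod n, A0 n v i * A2 n v B j = A2 n v B (j - i) := by
    intro i j
    rw [hA0 i, hA2 j, hA2 (j - i), mulDO, Circ_del_mul, Circ_del_mul]
    refine FBO _ _ _ _ (fun s => ?_) (fun s => ?_)
    · rw [show j + (s - i) = (j - i) + s from by ring]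
    · rw [show -j - (s - i) = -(j - i) - s from by ring]
  have hA2A0 : ∀ i j : ZMod n, A2 n v B j * A0 n v i = A2 n v B (j - i) := by
    intro i j
    rw [hA0 i, hA2 j, hA2 (j - i), mulOD, Circ_mul_del, Circ_mul_del]
    refine FBO _ _ _ _ (fun s => ?_) (fun s => ?_)
    · rw [show j + (s - i) = (j - i) + s from by ring]
    · rw [show -j - (s - i) = -(j - i) - s from by ring]
  have hA0A3 : ∀ i : ZMod n, A0 n v i * A3 n v B = A3 n v B := by
    intro i
    rw [hA3, hA0 i, mulDO, Circ_del_mul, Circ_del_mul]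
  have hA3A0 : ∀ i : ZMod n, A3 n v B * A0 n v i = A3 n v B := by
    intro i
    rw [hA3, hA0 i, mulOD, Circ_mul_del, Circ_mul_del]
  -- products with A1
  have hA1A1 : A1 n v * A1 n v
      = ((n : ℤ) * ((v : ℤ) - 2)) • A1 n v + ((n : ℤ) * ((v : ℤ) - 1)) • ∑ i : ZMod n, A0 n v i := by
    rw [hA1, hsumA0, mulDD, Circ_const_const]
    simp only [Matrix.fromBlocks_smul, Matrix.fromBlocks_add, Circ_smul, Circ_add, smul_zero,
      add_zero, zero_add]
    refine FB4 _ _ _ _ (fun s => ?_) (fun s => ?_) <;>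
    · rw [mul_sub, sub_mul, one_mul, mul_one, JJv]
      module
  have hA1A2 : ∀ i : ZMod n, A1 n v * A2 n v B i
      = ((k : ℤ) - 1) • (∑ j : ZMod n, A2 n v B j) + (k : ℤ) • A3 n v B := by
    intro i
    rw [hA1, hA2 i, mulDO, Circ_const_mul, Circ_const_mul, hsumA2, hA3]
    simp only [Matrix.fromBlocks_smul, Matrix.fromBlocks_add, Circ_smul, Circ_add, smul_zero,
      add_zero, zero_add]
    refine FBO _ _ _ _ (fun s => ?_) (fun s => ?_)
    · rw [hshift1 i, sub_mul, one_mul, hcol]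
      module
    · rw [hshift2 i, sub_mul, one_mul, hcolT]
      module
  have hA2A1 : ∀ i : ZMod n, A2 n v B i * A1 n v
      = ((k : ℤ) - 1) • (∑ j : ZMod n, A2 n v B j) + (k : ℤ) • A3 n v B := by
    intro i
    rw [hA1, hA2 i, mulOD, Circ_mul_const, Circ_mul_const, hsumA2, hA3]
    simp only [Matrix.fromBlocks_smul, Matrix.fromBlocks_add, Circ_smul, Circ_add, smul_zero,
      add_zero, zero_add]
    refine FBO _ _ _ _ (fun s => ?_) (fun s => ?_)
    · rw [hshift1 i, mul_sub, mul_one, hrow]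
      module
    · rw [hshift2 i, mul_sub, mul_one, hrowT]
      module
  have hA1A3 : A1 n v * A3 n v B
      = ((n : ℤ) * ((v : ℤ) - (k : ℤ))) • (∑ j : ZMod n, A2 n v B j)
        + ((n : ℤ) * ((v : ℤ) - (k : ℤ)) - (n : ℤ)) • A3 n v B := by
    rw [hA1, hA3, mulDO, Circ_const_const, Circ_const_const, hsumA2]
    simp only [Matrix.fromBlocks_smul, Matrix.fromBlocks_add, Circ_smul, Circ_add, smul_zero,
      add_zero, zero_add]
    refine FBO _ _ _ _ (fun s => ?_) (fun s => ?_)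
    · rw [sub_mul, one_mul, mul_sub, JJv, hcol]
      module
    · rw [sub_mul, one_mul, mul_sub, JJv, hcolT]
      module
  have hA3A1 : A3 n v B * A1 n v
      = ((n : ℤ) * ((v : ℤ) - (k : ℤ))) • (∑ j : ZMod n, A2 n v B j)
        + ((n : ℤ) * ((v : ℤ) - (k : ℤ)) - (n : ℤ)) • A3 n v B := by
    rw [hA1, hA3, mulOD, Circ_const_const, Circ_const_const, hsumA2]
    simp only [Matrix.fromBlocks_smul, Matrix.fromBlocks_add, Circ_smul, Circ_add, smul_zero,
      add_zero, zero_add]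
    refine FBO _ _ _ _ (fun s => ?_) (fun s => ?_)
    · rw [mul_sub, mul_one, sub_mul, JJv, hrow]
      module
    · rw [mul_sub, mul_one, sub_mul, JJv, hrowT]
      module
  -- A2 * A2
  have hA2A2 : ∀ i j : ZMod n, A2 n v B i * A2 n v B j
      = (μ : ℤ) • A1 n v + (k : ℤ) • A0 n v (-(i + j)) := by
    intro i j
    rw [hA2 i, hA2 j, mulOO, hA1, hA0 (-(i + j)), Circ_mul, Circ_mul]
    simp only [Matrix.fromBlocks_smul, Matrix.fromBlocks_add, Circ_smul, Circ_add, smul_zero,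
      add_zero, zero_add]
    refine FB4 _ _ _ _ (fun s => ?_) (fun s => ?_)
    · calc ∑ m : ZMod n, B (i + m) * (B (-j - (s - m)))ᵀ
          = ∑ m : ZMod n, B (i + m) * (B ((i + m) - (i + j + s)))ᵀ :=
            Finset.sum_congr rfl fun m _ => by
              rw [show (i + m) - (i + j + s) = -j - (s - m) from by ring]
        _ = ∑ g : ZMod n, B g * (B (g - (i + j + s)))ᵀ :=
            zsum_shift (fun g => B g * (B (g - (i + j + s)))ᵀ) i
        _ = (μ : ℤ) • (Jmat (Fin v) - 1) + if i + j + s = 0 then (k : ℤ) • 1 else 0 :=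
            convB h1 h2 _
        _ = (μ : ℤ) • (Jmat (Fin v) - 1)
            + (k : ℤ) • (if s = -(i + j) then (1 : Matrix (Fin v) (Fin v) ℤ) else 0) := by
            congr 1
            by_cases hs : s = -(i + j)
            · rw [if_pos (by rw [hs]; ring), if_pos hs]
            · rw [if_neg (fun hh => hs (by linear_combination hh)), if_neg hs, smul_zero]
    · calc ∑ m : ZMod n, (B (-i - m))ᵀ * B (j + (s - m))
          = ∑ m : ZMod n, (B ((j + s - m) - (i + j + s)))ᵀ * B (j + s - m) :=
            Finset.sum_congr rfl fun m _ => by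
              rw [show (j + s - m) - (i + j + s) = -i - m from by ring,
                show j + s - m = j + (s - m) from by ring]
        _ = ∑ g : ZMod n, (B (g - (i + j + s)))ᵀ * B g :=
            zsum_sub (fun g => (B (g - (i + j + s)))ᵀ * B g) (j + s)
        _ = (μ : ℤ) • (Jmat (Fin v) - 1) + if i + j + s = 0 then (k : ℤ) • 1 else 0 :=
            convB' h1' h2' _
        _ = (μ : ℤ) • (Jmat (Fin v) - 1)
            + (k : ℤ) • (if s = -(i + j) then (1 : Matrix (Fin v) (Fin v) ℤ) else 0) := by
            congr 1
            by_cases hs : s = -(i + j)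
            · rw [if_pos (by rw [hs]; ring), if_pos hs]
            · rw [if_neg (fun hh => hs (by linear_combination hh)), if_neg hs, smul_zero]
  -- A2 * A3
  have hA2A3 : ∀ i : ZMod n, A2 n v B i * A3 n v B
      = ((k : ℤ) - (n : ℤ) * (μ : ℤ)) • A1 n v := by
    intro i
    rw [hA2 i, hA3, mulOO, Circ_mul_const, Circ_mul_const, hA1]
    simp only [Matrix.fromBlocks_smul, Circ_smul, smul_zero]
    refine FB4 _ _ _ _ (fun s => ?_) (fun s => ?_)
    · rw [hshift1 i, mul_sub, hrow, hBBt']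
      module
    · rw [hshift2 i, mul_sub, hrowT, hBtB']
      module
  have hA3A2 : ∀ i : ZMod n, A3 n v B * A2 n v B i
      = ((k : ℤ) - (n : ℤ) * (μ : ℤ)) • A1 n v := by
    intro i
    rw [hA2 i, hA3, mulOO, Circ_const_mul, Circ_const_mul, hA1]
    simp only [Matrix.fromBlocks_smul, Circ_smul, smul_zero]
    refine FB4 _ _ _ _ (fun s => ?_) (fun s => ?_)
    · rw [hshift2 i, sub_mul, hcolT, hBBt']
      module
    · rw [hshift1 i, sub_mul, hcol, hBtB']
      module
  -- A3 * A3
  have hA3A3 : A3 n v B * A3 n v B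
      = ((n : ℤ) * ((v : ℤ) - 2 * (k : ℤ) + (n : ℤ) * (μ : ℤ))) • A1 n v
        + ((n : ℤ) * ((v : ℤ) - (k : ℤ))) • ∑ i : ZMod n, A0 n v i := by
    rw [hA3, mulOO, Circ_const_const, Circ_const_const, hA1, hsumA0]
    simp only [Matrix.fromBlocks_smul, Matrix.fromBlocks_add, Circ_smul, Circ_add, smul_zero,
      add_zero, zero_add]
    refine FB4 _ _ _ _ (fun s => ?_) (fun s => ?_)
    · rw [sub_mul, mul_sub, mul_sub, JJv, hcolT, hrow, hBBt']
      module
    · rw [sub_mul, mul_sub, mul_sub, JJv, hcol, hrowT, hBtB']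
      module
  refine ⟨?_, ?_, ?_, ?_, ?_, ?_, ?_, ?_⟩
  · -- A0 0 = 1
    rw [hA0 0, Circ_del_zero, Matrix.fromBlocks_one]
  · -- sum = J
    rw [hsumA0, hA1, hsumA2, hA3]
    ext (p | p) (q | q) <;>
      simp [Matrix.add_apply, Circ_apply, Jmat, Matrix.sub_apply, Matrix.one_apply,
        Matrix.sum_apply] <;> split_ifs <;> ring
  · -- A0 transpose
    intro i
    rw [hA0 i, hA0 (-i), Matrix.fromBlocks_transpose, Matrix.transpose_zero, Circ_transpose]
    refine FB4 _ _ _ _ (fun m => ?_) (fun m => ?_) <;>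
    · rw [apply_ite Matrix.transpose, Matrix.transpose_one, Matrix.transpose_zero]
      by_cases hm : m = -i
      · rw [if_pos (by rw [hm]; ring), if_pos hm]
      · rw [if_neg (fun hh => hm (by rw [← hh]; ring)), if_neg hm]
  · -- A1 transpose
    rw [hA1, Matrix.fromBlocks_transpose, Matrix.transpose_zero, Circ_transpose]
    refine FB4 _ _ _ _ (fun m => ?_) (fun m => ?_) <;>
      rw [Matrix.transpose_sub, Matrix.transpose_one, hJT]
  · -- A2 transpose
    intro i
    rw [hA2 i, hA2 (-i), Matrix.fromBlocks_transpose, Matrix.transpose_zero,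
      Circ_transpose, Circ_transpose]
    refine FBO _ _ _ _ (fun m => ?_) (fun m => ?_)
    · rw [Matrix.transpose_transpose, show -i - -m = -i + m from by ring]
    · rw [show i + -m = -(-i) - m from by ring]
  · -- A3 transpose
    rw [hA3, Matrix.fromBlocks_transpose, Matrix.transpose_zero, Circ_transpose, Circ_transpose]
    refine FBO _ _ _ _ (fun m => ?_) (fun m => ?_)
    · rw [Matrix.transpose_sub, hJT, Matrix.transpose_sum]
      simp
    · rw [Matrix.transpose_sub, hJT, Matrix.transpose_sum]
  · -- commutativity
    intro X hX Y hY
    simp only [Fam, Set.mem_union, Set.mem_insert_iff, Set.mem_singleton_iff,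
      Set.mem_range] at hX hY
    rcases hX with ((rfl | rfl) | ⟨i, rfl⟩) | ⟨i, rfl⟩ <;>
      rcases hY with ((rfl | rfl) | ⟨j, rfl⟩) | ⟨j, rfl⟩
    · rfl
    · rw [hA1A3, hA3A1]
    · rw [hA1A0, hA0A1]
    · rw [hA1A2, hA2A1]
    · rw [hA3A1, hA1A3]
    · rfl
    · rw [hA3A0, hA0A3]
    · rw [hA3A2, hA2A3]
    · rw [hA0A1, hA1A0]
    · rw [hA0A3, hA3A0]
    · rw [hA0A0, hA0A0, add_comm]
    · rw [hA0A2, hA2A0]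
    · rw [hA2A1, hA1A2]
    · rw [hA2A3, hA3A2]
    · rw [hA2A0, hA0A2]
    · rw [hA2A2, hA2A2, add_comm i j]
  · -- span closed under multiplication
    have memA1 : A1 n v ∈ Fam n v B := by
      simp [Fam]
    have memA3 : A3 n v B ∈ Fam n v B := by
      simp [Fam]
    have memA0 : ∀ i, A0 n v i ∈ Fam n v B := fun i => by
      simp only [Fam, Set.mem_union, Set.mem_range]
      exact Or.inl (Or.inr ⟨i, rfl⟩)
    have memA2 : ∀ i, A2 n v B i ∈ Fam n v B := fun i => by
      simp only [Fam, Set.mem_union, Set.mem_range]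
      exact Or.inr ⟨i, rfl⟩
    have spA1 := Submodule.subset_span (R := ℤ) memA1
    have spA3 := Submodule.subset_span (R := ℤ) memA3
    have spA0 : ∀ i, A0 n v i ∈ Submodule.span ℤ (Fam n v B) :=
      fun i => Submodule.subset_span (memA0 i)
    have spA2 : ∀ i, A2 n v B i ∈ Submodule.span ℤ (Fam n v B) :=
      fun i => Submodule.subset_span (memA2 i)
    have spSum0 : (∑ i : ZMod n, A0 n v i) ∈ Submodule.span ℤ (Fam n v B) :=
      Submodule.sum_mem _ fun i _ => spA0 i
    have spSum2 : (∑ i : ZMod n, A2 n v B i) ∈ Submodule.span ℤ (Fam n v B) :=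
      Submodule.sum_mem _ fun i _ => spA2 i
    have key : ∀ X ∈ Fam n v B, ∀ Y ∈ Fam n v B, X * Y ∈ Submodule.span ℤ (Fam n v B) := by
      intro X hX Y hY
      simp only [Fam, Set.mem_union, Set.mem_insert_iff, Set.mem_singleton_iff,
        Set.mem_range] at hX hY
      rcases hX with ((rfl | rfl) | ⟨i, rfl⟩) | ⟨i, rfl⟩ <;>
        rcases hY with ((rfl | rfl) | ⟨j, rfl⟩) | ⟨j, rfl⟩
      · rw [hA1A1]
        exact Submodule.add_mem _ (Submodule.smul_mem _ _ spA1) (Submodule.smul_mem _ _ spSum0)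
      · rw [hA1A3]
        exact Submodule.add_mem _ (Submodule.smul_mem _ _ spSum2) (Submodule.smul_mem _ _ spA3)
      · rw [hA1A0]; exact spA1
      · rw [hA1A2]
        exact Submodule.add_mem _ (Submodule.smul_mem _ _ spSum2) (Submodule.smul_mem _ _ spA3)
      · rw [hA3A1]
        exact Submodule.add_mem _ (Submodule.smul_mem _ _ spSum2) (Submodule.smul_mem _ _ spA3)
      · rw [hA3A3]
        exact Submodule.add_mem _ (Submodule.smul_mem _ _ spA1) (Submodule.smul_mem _ _ spSum0)
      · rw [hA3A0]; exact spA3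
      · rw [hA3A2]; exact Submodule.smul_mem _ _ spA1
      · rw [hA0A1]; exact spA1
      · rw [hA0A3]; exact spA3
      · rw [hA0A0]; exact spA0 _
      · rw [hA0A2]; exact spA2 _
      · rw [hA2A1]
        exact Submodule.add_mem _ (Submodule.smul_mem _ _ spSum2) (Submodule.smul_mem _ _ spA3)
      · rw [hA2A3]; exact Submodule.smul_mem _ _ spA1
      · rw [hA2A0]; exact spA2 _
      · rw [hA2A2]
        exact Submodule.add_mem _ (Submodule.smul_mem _ _ spA1) (Submodule.smul_mem _ _ (spA0 _))
    intro X hX Y hY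
    refine Submodule.span_induction₂
      (p := fun X Y _ _ => X * Y ∈ Submodule.span ℤ (Fam n v B))
      (fun x y hx hy => key x hx y hy)
      (fun y _ => by show 0 * y ∈ Submodule.span ℤ (Fam n v B); rw [zero_mul]; exact Submodule.zero_mem _)
      (fun x _ => by show x * 0 ∈ Submodule.span ℤ (Fam n v B); rw [mul_zero]; exact Submodule.zero_mem _)
      (fun x y z _ _ _ hxz hyz => by show (x + y) * z ∈ Submodule.span ℤ (Fam n v B); rw [add_mul]; exact Submodule.add_mem _ hxz hyz)
      (fun x y z _ _ _ hxy hxz => by show x * (y + z) ∈ Submodule.span ℤ (Fam n v B); rw [mul_add]; exact Submodule.add_mem _ hxy hxz)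
      (fun r x y _ _ hxy => by show (r • x) * y ∈ Submodule.span ℤ (Fam n v B); rw [smul_mul_assoc]; exact Submodule.smul_mem _ _ hxy)
      (fun r x y _ _ hxy => by show x * (r • y) ∈ Submodule.span ℤ (Fam n v B); rw [mul_smul_comm]; exact Submodule.smul_mem _ _ hxy)
      hX hY
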